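/- Every fraction in the unit k=3 Stern-Brocot tree with starting terms 0/1 and 1/1 has odd denominator: if a tree is defined by starting with the pair (0/1, 1/1) and repeatedly inserting between consecutive fractions p/q, r/s the reduced weighted mediants of (2p+r)/(2q+s) and (p+2r)/(q+2s), then every fraction in every row has odd denominator. -/

import Mathlib

/-- Reduce a fraction (numerator, denominator) to lowest terms. -/
def reduceFrac (x : ℤ × ℤ) : ℤ × ℤ :=
  (x.1 / Int.gcd x.1 x.2, x.2 / Int.gcd x.1 x.2)

/-- The reduced left weighted mediant (k = 3) of two fractions. -/
def leftMediant (x y : ℤ × ℤ) : ℤ × ℤ :=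
  reduceFrac (2 * x.1 + y.1, 2 * x.2 + y.2)

/-- The reduced right weighted mediant (k = 3) of two fractions. -/
def rightMediant (x y : ℤ × ℤ) : ℤ × ℤ :=
  reduceFrac (x.1 + 2 * y.1, x.2 + 2 * y.2)

/-- Insert the two reduced weighted mediants between every pair of consecutive fractions. -/
def insertMediants : List (ℤ × ℤ) → List (ℤ × ℤ)
  | [] => []
  | [x] => [x]
  | x :: y :: rest => x :: leftMediant x y :: rightMediant x y :: insertMediants (y :: rest)

/-- The rows of the k = 3 Stern-Brocot tree with starting terms `x` and `y`. -/
def sbRow (x y : ℤ × ℤ) : ℕ → List (ℤ × ℤ)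
  | 0 => [x, y]
  | n + 1 => insertMediants (sbRow x y n)

lemma odd_div_gcd (a b : ℤ) (hb : Odd b) : Odd (b / Int.gcd a b) := by
  set g : ℤ := (Int.gcd a b : ℤ) with hg
  obtain ⟨c, hc⟩ : g ∣ b := Int.gcd_dvd_right a b
  rw [hc] at hb
  have hco : Odd c := (Int.odd_mul.mp hb).2
  have hgne : g ≠ 0 := by
    intro h
    rw [h, zero_mul] at hb
    obtain ⟨m, hm⟩ := hb; omega
  rw [hc, Int.mul_ediv_cancel_left _ hgne]
  exact hco

lemma reduceFrac_odd (x : ℤ × ℤ) (h : Odd x.2) : Odd (reduceFrac x).2 :=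
  odd_div_gcd x.1 x.2 h

lemma insertMediants_odd (l : List (ℤ × ℤ)) (h : ∀ z ∈ l, Odd z.2) :
    ∀ z ∈ insertMediants l, Odd z.2 := by
  induction l with
  | nil => simp [insertMediants]
  | cons x rest ih =>
    cases rest with
    | nil => simpa [insertMediants] using h
    | cons y rest' =>
      intro z hz
      have hx := h x (by simp)
      have hy := h y (by simp)
      simp only [insertMediants, List.mem_cons] at hz
      rcases hz with rfl | rfl | rfl | hz
      · exact hx
      · obtain ⟨b, hb⟩ := hy
        exact reduceFrac_odd _ ⟨x.2 + b, by dsimp [leftMediant]; omega⟩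
      · obtain ⟨a, ha⟩ := hx
        exact reduceFrac_odd _ ⟨a + y.2, by dsimp [rightMediant]; omega⟩
      · exact ih (fun w hw => h w (List.mem_cons_of_mem _ hw)) z hz

/-- Every fraction in the unit k = 3 Stern-Brocot tree (starting terms 0/1 and 1/1)
has odd denominator. -/
theorem unit_tree_odd_denominators (n : ℕ) (z : ℤ × ℤ)
    (hz : z ∈ sbRow (0, 1) (1, 1) n) : Odd z.2 := by
  induction n generalizing z with
  | zero =>
    simp only [sbRow, List.mem_cons, List.mem_singleton] at hz
    rcases hz with rfl | rfl | h
    · exact ⟨0, by norm_num⟩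
    · exact ⟨0, by norm_num⟩
    · simp at h
  | succ n ih => exact insertMediants_odd _ ih z hz
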